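/- arXiv:1305.5798 — 3 statements merged into one kernel-verified Lean document; each statement's English description precedes it below -/
import Mathlib

section
/- Let f be a formal power series over ℂ of the form f(z) = λz + O(z²), where λ is a primitive q-th root of unity. Then the q-th iterate satisfies f^{∘q}(z) = z + a z^{q+1} + O(z^{q+2}) for some a ∈ ℂ; that is, in f^{∘q}(z) − z all coefficients of z, z², …, z^q vanish. -/
open PowerSeries

/-- Composition `f(g(z))` of formal power series, valid when `g` has zero constant term
(then `gᵏ` has order at least `k`, so the defining sum is finite). -/
noncomputable def psComp (f g : PowerSeries ℂ) : PowerSeries ℂ :=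
  PowerSeries.mk fun n =>
    ∑ k ∈ Finset.range (n + 1), PowerSeries.coeff k f * PowerSeries.coeff n (g ^ k)

/-- The `k`-th iterate `f ∘ f ∘ ⋯ ∘ f` of a formal power series with zero constant term. -/
noncomputable def psIterate (f : PowerSeries ℂ) (k : ℕ) : PowerSeries ℂ :=
  (fun g => psComp f g)^[k] PowerSeries.X

lemma coeff_psComp (f g : PowerSeries ℂ) (n : ℕ) :
    coeff n (psComp f g) = ∑ k ∈ Finset.range (n + 1), coeff k f * coeff n (g ^ k) := by
  simp [psComp]

lemma coeff_pow_lt {g : PowerSeries ℂ} (hg : constantCoeff g = 0) :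
    ∀ k n, n < k → coeff n (g ^ k) = 0 := by
  intro k
  induction k with
  | zero => intro n hn; omega
  | succ k ih =>
    intro n hn
    rw [pow_succ, coeff_mul]
    apply Finset.sum_eq_zero
    rintro ⟨p, r⟩ hpr
    rw [Finset.HasAntidiagonal.mem_antidiagonal] at hpr
    rcases Nat.eq_zero_or_pos r with h | h
    · subst h
      rw [coeff_zero_eq_constantCoeff, hg, mul_zero]
    · rw [ih p (by omega), zero_mul]

lemma coeff_psComp' {g : PowerSeries ℂ} (hg : constantCoeff g = 0) (f : PowerSeries ℂ)
    {n N : ℕ} (hN : n < N) :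
    coeff n (psComp f g) = ∑ k ∈ Finset.range N, coeff k f * coeff n (g ^ k) := by
  rw [coeff_psComp]
  apply Finset.sum_subset
  · intro k hk
    simp only [Finset.mem_range] at *
    omega
  · intro k hk hk'
    simp only [Finset.mem_range] at *
    rw [coeff_pow_lt hg k n (by omega), mul_zero]

lemma psComp_mul (a b h : PowerSeries ℂ) (hh : constantCoeff h = 0) :
    psComp (a * b) h = psComp a h * psComp b h := by
  ext n
  set F : ℕ × ℕ → ℂ := fun p => coeff p.1 a * coeff p.2 b * coeff n (h ^ (p.1 + p.2))
    with hF
  have key : ∀ (S : Finset (ℕ × ℕ)),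
      ((Finset.range (n+1)) ×ˢ (Finset.range (n+1))).filter (fun p => p.1 + p.2 ≤ n) = S →
      True := fun _ _ => trivial
  -- LHS
  have hL : coeff n (psComp (a * b) h)
      = ∑ k ∈ Finset.range (n+1), ∑ p ∈ Finset.HasAntidiagonal.antidiagonal k, F p := by
    rw [coeff_psComp]
    refine Finset.sum_congr rfl fun k hk => ?_
    rw [coeff_mul, Finset.sum_mul]
    refine Finset.sum_congr rfl fun p hp => ?_
    rw [Finset.HasAntidiagonal.mem_antidiagonal] at hp
    rw [hF]; simp only []; rw [hp]
  have hbij : ((Finset.range (n+1)).biUnion Finset.HasAntidiagonal.antidiagonal)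
      = ((Finset.range (n+1)) ×ˢ (Finset.range (n+1))).filter (fun p => p.1 + p.2 ≤ n) := by
    ext ⟨i, j⟩
    simp only [Finset.mem_biUnion, Finset.mem_range, Finset.HasAntidiagonal.mem_antidiagonal,
      Finset.mem_filter, Finset.mem_product]
    constructor
    · rintro ⟨k, hk, rfl⟩; omega
    · intro h'; exact ⟨i + j, by omega, rfl⟩
  have hL2 : coeff n (psComp (a * b) h)
      = ∑ p ∈ ((Finset.range (n+1)) ×ˢ (Finset.range (n+1))).filter
          (fun p => p.1 + p.2 ≤ n), F p := by
    rw [hL, ← hbij, Finset.sum_biUnion]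
    intro x hx y hy hxy
    simp only [Finset.disjoint_left, Finset.HasAntidiagonal.mem_antidiagonal]
    intro p hp hp'
    exact hxy (hp ▸ hp')
  -- RHS
  have hR : coeff n (psComp a h * psComp b h)
      = ∑ p ∈ (Finset.range (n+1)) ×ˢ (Finset.range (n+1)), F p := by
    rw [coeff_mul]
    have : ∀ p ∈ Finset.HasAntidiagonal.antidiagonal n,
        coeff p.1 (psComp a h) * coeff p.2 (psComp b h)
        = ∑ i ∈ Finset.range (n+1), ∑ j ∈ Finset.range (n+1),
            (coeff i a * coeff p.1 (h ^ i)) * (coeff j b * coeff p.2 (h ^ j)) := by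
      intro p hp
      rw [Finset.HasAntidiagonal.mem_antidiagonal] at hp
      rw [coeff_psComp' hh a (show p.1 < n + 1 by omega),
        coeff_psComp' hh b (show p.2 < n + 1 by omega), Finset.sum_mul_sum]
    rw [Finset.sum_congr rfl this, Finset.sum_comm]
    rw [Finset.sum_product]
    refine Finset.sum_congr rfl fun i hi => ?_
    rw [Finset.sum_comm]
    refine Finset.sum_congr rfl fun j hj => ?_
    rw [hF]; simp only []
    rw [pow_add, coeff_mul, Finset.mul_sum]
    refine Finset.sum_congr rfl fun p hp => ?_
    ring
  rw [hL2, hR]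
  apply Finset.sum_subset (Finset.filter_subset _ _)
  intro p hp hp'
  simp only [Finset.mem_filter, Finset.mem_product, Finset.mem_range] at hp hp'
  rw [hF]; simp only []
  rw [coeff_pow_lt hh _ _ (by omega), mul_zero]

lemma psComp_one (h : PowerSeries ℂ) : psComp 1 h = 1 := by
  ext n
  rw [coeff_psComp]
  rw [Finset.sum_eq_single 0]
  · simp
  · intro k hk hk0
    rw [coeff_one, if_neg hk0, zero_mul]
  · intro hn; simp at hn

lemma psComp_pow (g h : PowerSeries ℂ) (hh : constantCoeff h = 0) (m : ℕ) :
    psComp (g ^ m) h = (psComp g h) ^ m := by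
  induction m with
  | zero => simpa using psComp_one h
  | succ m ih => rw [pow_succ, psComp_mul _ _ _ hh, ih, pow_succ]

lemma psComp_assoc (f g h : PowerSeries ℂ) (hg : constantCoeff g = 0)
    (hh : constantCoeff h = 0) :
    psComp (psComp f g) h = psComp f (psComp g h) := by
  ext n
  rw [coeff_psComp, coeff_psComp]
  have step : ∀ k ∈ Finset.range (n+1),
      coeff k (psComp f g) * coeff n (h ^ k)
      = ∑ m ∈ Finset.range (n+1), coeff m f * (coeff k (g ^ m) * coeff n (h ^ k)) := by
    intro k hk
    rw [Finset.mem_range] at hk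
    rw [coeff_psComp' hg f (show k < n + 1 by omega), Finset.sum_mul]
    exact Finset.sum_congr rfl fun m _ => by ring
  rw [Finset.sum_congr rfl step, Finset.sum_comm]
  refine Finset.sum_congr rfl fun m _ => ?_
  rw [← Finset.mul_sum]
  rw [← psComp_pow g h hh m, coeff_psComp' hh (g ^ m) (show n < n + 1 by omega)]

lemma psComp_X (f : PowerSeries ℂ) : psComp f X = f := by
  ext n
  rw [coeff_psComp]
  rw [Finset.sum_eq_single n]
  · simp [coeff_X_pow]
  · intro k hk hkn
    rw [coeff_X_pow, if_neg (fun h => hkn h.symm), mul_zero]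
  · intro hn; simp at hn

lemma X_psComp {g : PowerSeries ℂ} (hg : constantCoeff g = 0) : psComp X g = g := by
  ext n
  rw [coeff_psComp]
  cases n with
  | zero =>
    simp [coeff_zero_eq_constantCoeff, hg]
  | succ n =>
    rw [Finset.sum_eq_single 1]
    · simp
    · intro k hk hk1
      rw [coeff_X, if_neg hk1, zero_mul]
    · intro hn; simp at hn

lemma constantCoeff_psComp (f g : PowerSeries ℂ) (h0 : constantCoeff f = 0) :
    constantCoeff (psComp f g) = 0 := by
  rw [← coeff_zero_eq_constantCoeff, coeff_psComp]
  simp [coeff_zero_eq_constantCoeff, h0]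

lemma constantCoeff_psIterate (f : PowerSeries ℂ) (h0 : constantCoeff f = 0) (k : ℕ) :
    constantCoeff (psIterate f k) = 0 := by
  induction k with
  | zero => simp [psIterate]
  | succ k ih =>
    rw [psIterate, Function.iterate_succ_apply']
    exact constantCoeff_psComp f _ h0

lemma psIterate_comm (f : PowerSeries ℂ) (h0 : constantCoeff f = 0) (k : ℕ) :
    psComp f (psIterate f k) = psComp (psIterate f k) f := by
  induction k with
  | zero => rw [psIterate]; simp only [Function.iterate_zero, id_eq]
            rw [psComp_X, X_psComp h0]
  | succ k ih =>
    have hit : psIterate f (k+1) = psComp f (psIterate f k) := by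
      rw [psIterate, Function.iterate_succ_apply']; rfl
    rw [hit, psComp_assoc f (psIterate f k) f (constantCoeff_psIterate f h0 k) h0, ih]

lemma coeff_pow_key {g : PowerSeries ℂ} (hg : constantCoeff g = 0) {j : ℕ} (hj : 2 ≤ j)
    (hmid : ∀ i, 2 ≤ i → i < j → coeff i g = 0) :
    ∀ k, 1 ≤ k → ∀ m, m + 2 ≤ k + j →
      coeff m (g ^ k) = if m = k then (coeff 1 g) ^ k else 0 := by
  intro k hk
  induction k, hk using Nat.le_induction with
  | base =>
    intro m hm
    rw [pow_one]
    rcases Nat.lt_or_ge m 2 with h2 | h2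
    · interval_cases m
      · rw [if_neg (by omega), coeff_zero_eq_constantCoeff, hg]
      · rw [if_pos rfl, pow_one]
    · rw [if_neg (by omega), hmid m h2 (by omega)]
  | succ k hk ih =>
    intro m hm
    rw [pow_succ, coeff_mul]
    cases m with
    | zero =>
      rw [if_neg (by omega)]
      apply Finset.sum_eq_zero
      rintro ⟨p, r⟩ hpr
      rw [Finset.HasAntidiagonal.mem_antidiagonal] at hpr
      have hp : p = 0 := by omega
      have hr : r = 0 := by omega
      subst hp; subst hr
      rw [show ((0,0):ℕ×ℕ).2 = 0 from rfl, coeff_zero_eq_constantCoeff, hg, mul_zero]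
    | succ m' =>
      rw [Finset.sum_eq_single (m', 1)]
      · rw [ih m' (by omega)]
        by_cases hc : m' = k
        · subst hc
          rw [if_pos rfl, if_pos rfl, pow_succ]
        · rw [if_neg hc, if_neg (by omega), zero_mul]
      · rintro ⟨p, r⟩ hpr hne
        rw [Finset.HasAntidiagonal.mem_antidiagonal] at hpr
        have hpr' : p + r = m' + 1 := hpr
        rcases Nat.lt_or_ge r 2 with h2 | h2
        · interval_cases r
          · rw [show ((p,0):ℕ×ℕ).2 = 0 from rfl, coeff_zero_eq_constantCoeff, hg, mul_zero]
          · exfalso; apply hne; simp only [Prod.mk.injEq, and_true]; omega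
        · rcases Nat.lt_or_ge r j with hrj | hrj
          · rw [show ((p,r):ℕ×ℕ).2 = r from rfl, hmid r h2 hrj, mul_zero]
          · have hplt : p < k := by omega
            rw [show ((p,r):ℕ×ℕ).1 = p from rfl, ih p (by omega), if_neg (by omega), zero_mul]
      · intro hmem
        exfalso
        rw [Finset.HasAntidiagonal.mem_antidiagonal] at hmem
        exact hmem (by simp)

lemma coeff_self_pow {g : PowerSeries ℂ} (hg : constantCoeff g = 0) (k : ℕ) (hk : 1 ≤ k) :
    coeff k (g ^ k) = (coeff 1 g) ^ k := by
  have := coeff_pow_key hg (le_refl 2) (fun i h1 h2 => by omega) k hk k (by omega)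
  rwa [if_pos rfl] at this

lemma coeff_one_psComp (f g : PowerSeries ℂ) :
    coeff 1 (psComp f g) = coeff 1 f * coeff 1 g := by
  rw [coeff_psComp]
  rw [Finset.sum_range_succ, Finset.sum_range_one]
  simp

lemma coeff_one_psIterate (f : PowerSeries ℂ) (k : ℕ) :
    coeff 1 (psIterate f k) = (coeff 1 f) ^ k := by
  induction k with
  | zero => simp [psIterate]
  | succ k ih =>
    rw [psIterate, Function.iterate_succ_apply']
    show coeff 1 (psComp f (psIterate f k)) = _
    rw [coeff_one_psComp, ih, pow_succ]
    ring


/-- If `f(z) = λz + O(z²)` is a formal power series with `λ` a primitive `q`-th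
root of unity, then `f^{∘q}(z) = z + a z^{q+1} + O(z^{q+2})`: in `f^{∘q}(z) − z` all the
coefficients of `z, z², …, z^q` vanish. -/
theorem iterate_parabolic_normal_form (f : PowerSeries ℂ) (l : ℂ) (q : ℕ) (hq : 0 < q)
    (h0 : PowerSeries.constantCoeff f = 0) (h1 : PowerSeries.coeff 1 f = l)
    (hroot : l ^ q = 1) (hprim : ∀ j : ℕ, 0 < j → j < q → l ^ j ≠ 1) :
    ∃ a : ℂ,
      (∀ j : ℕ, 1 ≤ j → j ≤ q →
        PowerSeries.coeff j (psIterate f q - PowerSeries.X) = 0) ∧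
      PowerSeries.coeff (q + 1) (psIterate f q - PowerSeries.X) = a := by
  set F := psIterate f q with hFdef
  have hF0 : constantCoeff F = 0 := constantCoeff_psIterate f h0 q
  have hF1 : coeff 1 F = 1 := by rw [coeff_one_psIterate, h1, hroot]
  have hl0 : l ≠ 0 := fun h => by simp [h, zero_pow hq.ne'] at hroot
  -- main claim by strong induction
  have main : ∀ j, 2 ≤ j → j ≤ q → coeff j F = 0 := by
    intro j
    induction j using Nat.strong_induction_on with
    | _ j IH =>
      intro hj2 hjq
      have hmid : ∀ i, 2 ≤ i → i < j → coeff i F = 0 := fun i h2 hij =>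
        IH i hij h2 (by omega)
      have hcomm := psIterate_comm f h0 q
      have hLHS : coeff j (psComp f F) = l * coeff j F + coeff j f := by
        rw [coeff_psComp]
        have hsub : ({1, j} : Finset ℕ) ⊆ Finset.range (j + 1) := by
          intro x hx
          simp only [Finset.mem_insert, Finset.mem_singleton] at hx
          rcases hx with rfl | rfl <;> simp [Finset.mem_range] <;> omega
        rw [← Finset.sum_subset hsub]
        · rw [Finset.sum_pair (show (1:ℕ) ≠ j by omega)]
          rw [pow_one, h1, coeff_self_pow hF0 j (by omega), hF1, one_pow, mul_one]
        · intro k hk hk'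
          simp only [Finset.mem_range, Finset.mem_insert, Finset.mem_singleton,
            not_or] at hk hk'
          obtain ⟨hk1, hkj⟩ := hk'
          rcases Nat.eq_zero_or_pos k with rfl | hkpos
          · rw [pow_zero, coeff_one, if_neg (by omega), mul_zero]
          · have h2k : 2 ≤ k := by omega
            rw [coeff_pow_key hF0 hj2 hmid k (by omega) j (by omega), if_neg (by omega),
              mul_zero]
      have hRHS : coeff j (psComp F f) = coeff j f + coeff j F * l ^ j := by
        rw [coeff_psComp]
        have hsub : ({1, j} : Finset ℕ) ⊆ Finset.range (j + 1) := by
          intro x hx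
          simp only [Finset.mem_insert, Finset.mem_singleton] at hx
          rcases hx with rfl | rfl <;> simp [Finset.mem_range] <;> omega
        rw [← Finset.sum_subset hsub]
        · rw [Finset.sum_pair (show (1:ℕ) ≠ j by omega)]
          rw [pow_one, hF1, one_mul, coeff_self_pow h0 j (by omega), h1]
        · intro k hk hk'
          simp only [Finset.mem_range, Finset.mem_insert, Finset.mem_singleton,
            not_or] at hk hk'
          obtain ⟨hk1, hkj⟩ := hk'
          rcases Nat.eq_zero_or_pos k with rfl | hkpos
          · rw [coeff_zero_eq_constantCoeff, hF0, zero_mul]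
          · rw [hmid k (by omega) (by omega), zero_mul]
      have heq : l * coeff j F + coeff j f = coeff j f + coeff j F * l ^ j := by
        rw [← hLHS, ← hRHS, hcomm]
      have hfactor : coeff j F * (l - l ^ j) = 0 := by ring_nf; linear_combination heq
      have hne : l - l ^ j ≠ 0 := by
        intro h
        have hlj : l ^ j = l := (sub_eq_zero.mp h).symm
        have hj' : j - 1 + 1 = j := by omega
        have h2' : l ^ (j - 1) * l = 1 * l := by rw [one_mul, ← pow_succ, hj', hlj]
        exact hprim (j - 1) (by omega) (by omega) (mul_right_cancel₀ hl0 h2')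
      rcases mul_eq_zero.mp hfactor with h | h
      · exact h
      · exact absurd h hne
  refine ⟨coeff (q + 1) (psIterate f q - X), ?_, rfl⟩
  intro j hj1 hjq
  rw [map_sub]
  rcases Nat.lt_or_ge j 2 with h2 | h2
  · have : j = 1 := by omega
    subst this
    rw [hF1, coeff_X, if_pos rfl, sub_self]
  · rw [main j h2 hjq, coeff_X, if_neg (by omega), sub_zero]
end

section
/- Let ∼ be an equivalence relation on the unit circle S¹ ⊂ ℂ whose graph is a closed subset of S¹ × S¹, and which is 'unlinked': whenever t₁ ∼ t₂, t₃ ∼ t₄ and t₂ ≁ t₃, the open straight segments (t₁, t₂) and (t₃, t₄) in ℂ are disjoint. Then for every equivalence class A of ∼ and every connected component C of S¹ ∖ A, the set of points of C that are ∼-equivalent to some point of A is empty; equivalently, each class A has the property that the convex hulls of distinct classes are pairwise disjoint. -/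
open Set Metric

private lemma sphere_mem_of_mem_convexHull' {s : Set ℂ} (hs : s ⊆ sphere (0:ℂ) 1) {x : ℂ}
    (hx : x ∈ convexHull ℝ s) (hxs : x ∈ sphere (0:ℂ) 1) : x ∈ s := by
  have hball : convexHull ℝ s ⊆ closedBall (0:ℂ) 1 :=
    convexHull_min (hs.trans sphere_subset_closedBall) (convex_closedBall _ _)
  have hext : x ∈ (convexHull ℝ s).extremePoints ℝ := by
    refine ⟨hx, fun x₁ hx₁ x₂ hx₂ hseg => ?_⟩
    by_cases h12 : x₁ = x₂
    · subst h12
      rw [openSegment_same] at hseg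
      exact hseg.symm
    · exfalso
      have hint := (strictConvex_closedBall ℝ (0:ℂ) 1).openSegment_subset
        (hball hx₁) (hball hx₂) h12 hseg
      rw [interior_closedBall _ one_ne_zero] at hint
      rw [mem_ball_zero_iff] at hint
      rw [mem_sphere_zero_iff_norm] at hxs
      linarith
  exact extremePoints_convexHull_subset hext

private lemma frontier_triangle_subset' (a b c : ℂ) (h : AffineIndependent ℝ ![a, b, c]) :
    frontier (convexHull ℝ ({a, b, c} : Set ℂ)) ⊆
      segment ℝ a b ∪ segment ℝ b c ∪ segment ℝ a c := by
  have hspan : affineSpan ℝ (Set.range ![a, b, c]) = ⊤ := by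
    rw [h.affineSpan_eq_top_iff_card_eq_finrank_add_one]
    simp [Complex.finrank_real_complex]
  let B : AffineBasis (Fin 3) ℝ ℂ := ⟨![a, b, c], h, hspan⟩
  have hB : ⇑B = ![a, b, c] := rfl
  have hrange : Set.range ⇑B = ({a, b, c} : Set ℂ) := by
    rw [hB]
    ext z
    simp only [Set.mem_insert_iff, Set.mem_singleton_iff, Set.mem_range]
    constructor
    · rintro ⟨i, rfl⟩
      fin_cases i <;> simp
    · rintro (rfl | rfl | rfl)
      exacts [⟨0, rfl⟩, ⟨1, rfl⟩, ⟨2, rfl⟩]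
  intro z hz
  have hfin : ({a, b, c} : Set ℂ).Finite := (Set.finite_singleton c).insert b |>.insert a
  have hclosed : IsClosed (convexHull ℝ ({a, b, c} : Set ℂ)) := hfin.isClosed_convexHull ℝ
  have hzhull : z ∈ convexHull ℝ ({a, b, c} : Set ℂ) := by
    have := hz.1; rwa [hclosed.closure_eq] at this
  have hcoord_nonneg : ∀ i, 0 ≤ B.coord i z := by
    have hh := B.convexHull_eq_nonneg_coord
    rw [hrange] at hh
    rw [hh] at hzhull
    exact hzhull
  have hnotint : z ∉ interior (convexHull ℝ ({a, b, c} : Set ℂ)) := hz.2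
  have hex : B.coord 0 z = 0 ∨ B.coord 1 z = 0 ∨ B.coord 2 z = 0 := by
    by_contra hall
    push_neg at hall
    obtain ⟨h0, h1, h2⟩ := hall
    apply hnotint
    rw [← hrange, B.interior_convexHull]
    intro i
    fin_cases i
    · exact lt_of_le_of_ne (hcoord_nonneg 0) (Ne.symm h0)
    · exact lt_of_le_of_ne (hcoord_nonneg 1) (Ne.symm h1)
    · exact lt_of_le_of_ne (hcoord_nonneg 2) (Ne.symm h2)
  have hsum1 : ∑ i, B.coord i z = 1 := B.sum_coord_apply_eq_one z
  have hcomb : ∑ i, B.coord i z • B i = z := by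
    rw [← Finset.univ.affineCombination_eq_linear_combination ⇑B (fun i => B.coord i z) hsum1]
    exact B.affineCombination_coord_eq_self z
  rw [hB] at hcomb
  rw [Fin.sum_univ_three] at hcomb hsum1
  simp only [Matrix.cons_val_zero, Matrix.cons_val_one, Matrix.head_cons,
    Matrix.cons_val_two, Matrix.tail_cons] at hcomb
  rcases hex with hi | hi | hi
  · refine Or.inl (Or.inr ⟨B.coord 1 z, B.coord 2 z, hcoord_nonneg 1, hcoord_nonneg 2,
      by linarith, ?_⟩)
    rw [hi, zero_smul, zero_add] at hcomb
    exact hcomb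
  · refine Or.inr ⟨B.coord 0 z, B.coord 2 z, hcoord_nonneg 0, hcoord_nonneg 2,
      by linarith, ?_⟩
    rw [hi, zero_smul, add_zero] at hcomb
    exact hcomb
  · refine Or.inl (Or.inl ⟨B.coord 0 z, B.coord 1 z, hcoord_nonneg 0, hcoord_nonneg 1,
      by linarith, ?_⟩)
    rw [hi, zero_smul, add_zero] at hcomb
    exact hcomb

private lemma exists_point_on_edge' (t : Finset ℂ)
    (hind : AffineIndependent ℝ ((↑) : t → ℂ)) (M : Set ℂ)
    (hM : IsPreconnected M) (p : ℂ) (hpK : p ∈ convexHull ℝ (t : Set ℂ)) (hpM : p ∈ M)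
    (m : ℂ) (hmM : m ∈ M) (hmK : m ∉ convexHull ℝ (t : Set ℂ)) :
    ∃ a ∈ t, ∃ b ∈ t, ∃ q ∈ segment ℝ a b, q ∈ M := by
  set K := convexHull ℝ (t : Set ℂ) with hK
  have hKclosed : IsClosed K := t.finite_toSet.isClosed_convexHull ℝ
  have hfr : ∃ q, q ∈ frontier K ∧ q ∈ M := by
    by_contra hdisj
    push_neg at hdisj
    have hsub : M ⊆ interior K ∪ Kᶜ := by
      intro z hz
      by_cases hzK : z ∈ K
      · left
        have hzc : z ∈ closure K := subset_closure hzK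
        by_contra hzi
        exact hdisj z ⟨hzc, hzi⟩ hz
      · exact Or.inr hzK
    have hMint : M ⊆ interior K :=
      hM.subset_left_of_subset_union isOpen_interior hKclosed.isOpen_compl
        (disjoint_compl_right.mono_left interior_subset) hsub ⟨p, hpM, by
          by_contra hpi
          exact hdisj p ⟨subset_closure hpK, hpi⟩ hpM⟩
    exact hmK (interior_subset (hMint hmM))
  obtain ⟨q, hqfr, hqM⟩ := hfr
  have hqK : q ∈ K := by
    have := hqfr.1; rwa [hKclosed.closure_eq] at this
  have hcard : t.card ≤ 3 := by
    have h1 := hind.card_le_finrank_succ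
    rw [Fintype.card_coe] at h1
    have h2 : Module.finrank ℝ (vectorSpan ℝ (Set.range ((↑) : t → ℂ))) ≤ 2 := by
      have := Submodule.finrank_le (vectorSpan ℝ (Set.range ((↑) : t → ℂ)))
      rwa [Complex.finrank_real_complex] at this
    omega
  interval_cases hc : t.card
  · rw [Finset.card_eq_zero] at hc
    subst hc
    simp only [hK, Finset.coe_empty, convexHull_empty] at hpK
    exact hpK.elim
  · rw [Finset.card_eq_one] at hc
    obtain ⟨a, rfl⟩ := hc
    refine ⟨a, by simp, a, by simp, q, ?_, hqM⟩
    have : K = {a} := by rw [hK]; simp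
    rw [this] at hqK
    rw [hqK]
    exact left_mem_segment ℝ a a
  · rw [Finset.card_eq_two] at hc
    obtain ⟨a, b, hab, rfl⟩ := hc
    refine ⟨a, by simp, b, by simp, q, ?_, hqM⟩
    have : K = segment ℝ a b := by rw [hK]; push_cast; exact convexHull_pair a b
    rwa [this] at hqK
  · rw [Finset.card_eq_three] at hc
    obtain ⟨a, b, c, hab, hac, hbc, rfl⟩ := hc
    have hmem_a : a ∈ ({a, b, c} : Finset ℂ) := by simp
    have hmem_b : b ∈ ({a, b, c} : Finset ℂ) := by simp
    have hmem_c : c ∈ ({a, b, c} : Finset ℂ) := by simp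
    have hindep : AffineIndependent ℝ ![a, b, c] := by
      have hf : Function.Injective
          (![⟨a, hmem_a⟩, ⟨b, hmem_b⟩, ⟨c, hmem_c⟩] : Fin 3 → ({a, b, c} : Finset ℂ)) := by
        intro i j hij
        fin_cases i <;> fin_cases j <;> simp_all [Subtype.ext_iff]
      have := hind.comp_embedding ⟨_, hf⟩
      convert this using 1
      funext i
      fin_cases i <;> rfl
    have hKset : (({a, b, c} : Finset ℂ) : Set ℂ) = ({a, b, c} : Set ℂ) := by
      push_cast; simp
    have hfr2 := frontier_triangle_subset' a b c hindep
    rw [hK, hKset] at hqfr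
    rcases hfr2 hqfr with (hseg | hseg) | hseg
    · exact ⟨a, hmem_a, b, hmem_b, q, hseg, hqM⟩
    · exact ⟨b, hmem_b, c, hmem_c, q, hseg, hqM⟩
    · exact ⟨a, hmem_a, c, hmem_c, q, hseg, hqM⟩

/-- Let `∼` be an equivalence relation on the unit circle `S¹ ⊂ ℂ` whose graph
is closed in `S¹ × S¹` and which is unlinked: if `t₁ ∼ t₂`, `t₃ ∼ t₄` and `t₂ ≁ t₃`, then the
open straight segments `(t₁, t₂)` and `(t₃, t₄)` are disjoint. Then the convex hulls of
distinct equivalence classes are pairwise disjoint. -/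
theorem lamination_classes_convex_hulls_disjoint
    (S : Set ℂ) (hS : S = Metric.sphere (0 : ℂ) 1)
    (r : ℂ → ℂ → Prop) (hequiv : Equivalence r)
    (hclosed : IsClosed {p : ℂ × ℂ | p.1 ∈ S ∧ p.2 ∈ S ∧ r p.1 p.2})
    (hunlinked : ∀ t₁ ∈ S, ∀ t₂ ∈ S, ∀ t₃ ∈ S, ∀ t₄ ∈ S,
      r t₁ t₂ → r t₃ t₄ → ¬ r t₂ t₃ →
      Disjoint (openSegment ℝ t₁ t₂) (openSegment ℝ t₃ t₄)) :
    ∀ x ∈ S, ∀ y ∈ S, ¬ r x y →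
      Disjoint (convexHull ℝ {z ∈ S | r z x}) (convexHull ℝ {z ∈ S | r z y}) := by
  intro x hxS y hyS hxy
  rw [Set.disjoint_left]
  intro p hpA hpB
  -- Caratheodory
  rw [convexHull_eq_union] at hpA hpB
  simp only [Set.mem_iUnion, exists_prop] at hpA hpB
  obtain ⟨t, htA, hindt, hpt⟩ := hpA
  obtain ⟨u, huB, hindu, hpu⟩ := hpB
  have htS : ∀ z ∈ t, z ∈ S := fun z hz => (htA hz).1
  have huS : ∀ z ∈ u, z ∈ S := fun z hz => (huB hz).1
  have htx : ∀ z ∈ t, r z x := fun z hz => (htA hz).2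
  have huy : ∀ z ∈ u, r z y := fun z hz => (huB hz).2
  have hcross : ∀ a ∈ t, ∀ b ∈ u, ¬ r a b := by
    intro a ha b hb hab
    exact hxy (hequiv.trans (hequiv.symm (htx a ha))
      (hequiv.trans hab (huy b hb)))
  have hsphere_t : (t : Set ℂ) ⊆ sphere (0:ℂ) 1 := by
    intro z hz; rw [← hS]; exact htS z hz
  have hsphere_u : (u : Set ℂ) ⊆ sphere (0:ℂ) 1 := by
    intro z hz; rw [← hS]; exact huS z hz
  have hbu_not : ∀ b ∈ u, b ∉ convexHull ℝ (t : Set ℂ) := by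
    intro b hb hmem
    have hbS : b ∈ sphere (0:ℂ) 1 := by rw [← hS]; exact huS b hb
    have : b ∈ (t : Set ℂ) := sphere_mem_of_mem_convexHull' hsphere_t hmem hbS
    exact hcross b this b hb (hequiv.refl b)
  have hat_not : ∀ a ∈ t, a ∉ convexHull ℝ (u : Set ℂ) := by
    intro a ha hmem
    have haS : a ∈ sphere (0:ℂ) 1 := by rw [← hS]; exact htS a ha
    have : a ∈ (u : Set ℂ) := sphere_mem_of_mem_convexHull' hsphere_u hmem haS
    exact hcross a ha a this (hequiv.refl a)
  -- u is nonempty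
  have hune : ∃ b, b ∈ u := by
    by_contra hu
    push_neg at hu
    have : u = ∅ := Finset.eq_empty_iff_forall_notMem.2 hu
    subst this
    simp only [Finset.coe_empty, convexHull_empty] at hpu
    exact hpu.elim
  obtain ⟨b₀, hb₀⟩ := hune
  -- step 1 : a point q on an edge of conv t, inside conv u
  obtain ⟨a₁, ha₁, a₂, ha₂, q, hq_seg, hq_M⟩ :=
    exists_point_on_edge' t hindt (convexHull ℝ (u : Set ℂ))
      (convex_convexHull ℝ _).isPreconnected p hpt hpu
      b₀ (subset_convexHull ℝ _ hb₀) (hbu_not b₀ hb₀)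
  -- step 2 : a point q' on an edge of conv u, on the segment [a₁,a₂]
  obtain ⟨b₁, hb₁, b₂, hb₂, q', hq'_seg, hq'_in⟩ :=
    exists_point_on_edge' u hindu (segment ℝ a₁ a₂)
      (convex_segment a₁ a₂).isPreconnected q hq_M hq_seg
      a₁ (left_mem_segment ℝ a₁ a₂) (hat_not a₁ ha₁)
  -- final contradiction
  have hra : r a₁ a₂ := hequiv.trans (htx a₁ ha₁) (hequiv.symm (htx a₂ ha₂))
  have hrb : r b₁ b₂ := hequiv.trans (huy b₁ hb₁) (hequiv.symm (huy b₂ hb₂))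
  have ha₁S := htS a₁ ha₁
  have ha₂S := htS a₂ ha₂
  have hb₁S := huS b₁ hb₁
  have hb₂S := huS b₂ hb₂
  have hne : ∀ a ∈ t, ∀ b ∈ u, a ≠ b := by
    intro a ha b hb hab
    subst hab
    exact hcross a ha a hb (hequiv.refl a)
  rw [← insert_endpoints_openSegment] at hq'_in hq'_seg
  rcases hq'_in with h1 | h1 | h1 <;> rcases hq'_seg with h2 | h2 | h2
  · exact hne a₁ ha₁ b₁ hb₁ (by rw [← h1, ← h2])
  · exact hne a₁ ha₁ b₂ hb₂ (by rw [← h1, ← h2])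
  · -- q' = a₁ and q' ∈ openSegment b₁ b₂
    have hd := hunlinked a₁ ha₁S a₁ ha₁S b₁ hb₁S b₂ hb₂S (hequiv.refl a₁) hrb
      (hcross a₁ ha₁ b₁ hb₁)
    rw [openSegment_same] at hd
    exact (Set.disjoint_left.1 hd) rfl (h1 ▸ h2)
  · exact hne a₂ ha₂ b₁ hb₁ (by rw [← h1, ← h2])
  · exact hne a₂ ha₂ b₂ hb₂ (by rw [← h1, ← h2])
  · have hd := hunlinked a₂ ha₂S a₂ ha₂S b₁ hb₁S b₂ hb₂S (hequiv.refl a₂) hrb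
      (hcross a₂ ha₂ b₁ hb₁)
    rw [openSegment_same] at hd
    exact (Set.disjoint_left.1 hd) rfl (h1 ▸ h2)
  · -- q' ∈ openSegment a₁ a₂ and q' = b₁
    have hd := hunlinked a₁ ha₁S a₂ ha₂S b₁ hb₁S b₁ hb₁S hra (hequiv.refl b₁)
      (hcross a₂ ha₂ b₁ hb₁)
    rw [openSegment_same] at hd
    exact (Set.disjoint_left.1 hd) (h2 ▸ h1) rfl
  · have hd := hunlinked a₁ ha₁S a₂ ha₂S b₂ hb₂S b₂ hb₂S hra (hequiv.refl b₂)
      (hcross a₂ ha₂ b₂ hb₂)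
    rw [openSegment_same] at hd
    exact (Set.disjoint_left.1 hd) (h2 ▸ h1) rfl
  · have hd := hunlinked a₁ ha₁S a₂ ha₂S b₁ hb₁S b₂ hb₂S hra hrb
      (hcross a₂ ha₂ b₁ hb₁)
    exact (Set.disjoint_left.1 hd) h1 h2
end

section
/- Let f(z) = λz + b z² + z³ and suppose for a sequence bₙ → b' in ℂ there are points zₙ ≠ 0 with f_{λ,bₙ}^{∘N}(zₙ) = zₙ (fixed points of the N-th iterate) and zₙ → 0. Writing f_{λ,bₙ}^{∘N}(z) − z = z·(z − zₙ)·Q_{bₙ}(z) with Q_{bₙ} a polynomial whose coefficients depend continuously on bₙ, one concludes f_{λ,b'}^{∘N}(z) − z = z²·Q_{b'}(z); in particular 0 is a root of f_{λ,b'}^{∘N}(z) − z of multiplicity at least 2, i.e., (f_{λ,b'}^{∘N})'(0) = 1. -/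
open Filter

/-- Suppose `bₙ → b'`, and `zₙ ≠ 0` are fixed points of the `N`-th iterate of
`f_{λ,bₙ}(z) = λz + bz² + z³` with `zₙ → 0`, with factorizations
`f_{λ,bₙ}^{∘N}(z) − z = z (z − zₙ) Q_{bₙ}(z)` where the (polynomial) functions `Q_b` depend
continuously on `b`. Then `f_{λ,b'}^{∘N}(z) − z = z² Q_{b'}(z)`; in particular `0` is a root
of multiplicity at least `2`, i.e. `(f_{λ,b'}^{∘N})'(0) = 1`. -/
theorem parabolic_limit_of_merging_periodic_points (l b' : ℂ) (bseq : ℕ → ℂ)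
    (hb : Tendsto bseq atTop (nhds b')) (N : ℕ) (hN : 0 < N) (z : ℕ → ℂ)
    (hz0 : ∀ n, z n ≠ 0)
    (hzfix : ∀ n, (fun w : ℂ => l * w + bseq n * w ^ 2 + w ^ 3)^[N] (z n) = z n)
    (hzlim : Tendsto z atTop (nhds 0))
    (Q : ℂ → ℂ → ℂ) (hQcont : ∀ b : ℂ, Continuous (Q b))
    (hQb : ∀ w : ℂ, Tendsto (fun n => Q (bseq n) w) atTop (nhds (Q b' w)))
    (hfact : ∀ n, ∀ w : ℂ,
      (fun w : ℂ => l * w + bseq n * w ^ 2 + w ^ 3)^[N] w - w =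
        w * (w - z n) * Q (bseq n) w) :
    (∀ w : ℂ,
      (fun w : ℂ => l * w + b' * w ^ 2 + w ^ 3)^[N] w - w = w ^ 2 * Q b' w) ∧
    deriv ((fun w : ℂ => l * w + b' * w ^ 2 + w ^ 3)^[N]) 0 = 1 := by
  have key : ∀ w : ℂ,
      (fun w : ℂ => l * w + b' * w ^ 2 + w ^ 3)^[N] w - w = w ^ 2 * Q b' w := by
    intro w
    have hiter : ∀ k : ℕ,
        Tendsto (fun n => (fun u : ℂ => l * u + bseq n * u ^ 2 + u ^ 3)^[k] w) atTop
          (nhds ((fun u : ℂ => l * u + b' * u ^ 2 + u ^ 3)^[k] w)) := by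
      intro k
      induction k with
      | zero => simpa using (tendsto_const_nhds : Tendsto (fun _ : ℕ => w) atTop (nhds w))
      | succ k ih =>
        simp only [Function.iterate_succ', Function.comp_apply]
        have hcont : Continuous (fun p : ℂ × ℂ => l * p.2 + p.1 * p.2 ^ 2 + p.2 ^ 3) := by
          continuity
        have := (hcont.tendsto
            (b', (fun u : ℂ => l * u + b' * u ^ 2 + u ^ 3)^[k] w)).comp (hb.prodMk_nhds ih)
        exact this
    have h1 : Tendsto (fun n => (fun u : ℂ => l * u + bseq n * u ^ 2 + u ^ 3)^[N] w - w) atTop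
        (nhds ((fun u : ℂ => l * u + b' * u ^ 2 + u ^ 3)^[N] w - w)) :=
      (hiter N).sub tendsto_const_nhds
    have h2 : Tendsto (fun n => w * (w - z n) * Q (bseq n) w) atTop
        (nhds (w ^ 2 * Q b' w)) := by
      have hsub : Tendsto (fun n => w - z n) atTop (nhds (w - 0)) :=
        tendsto_const_nhds.sub hzlim
      have := (hsub.const_mul w).mul (hQb w)
      have hw : w * (w - 0) * Q b' w = w ^ 2 * Q b' w := by ring
      rw [← hw]
      exact this
    have h1' := h1
    simp only [hfact] at h1'
    exact tendsto_nhds_unique h1' h2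
  refine ⟨key, ?_⟩
  have heq : (fun w : ℂ => l * w + b' * w ^ 2 + w ^ 3)^[N] =
      fun w : ℂ => w + w ^ 2 * Q b' w := by
    funext w
    have := key w
    linear_combination this
  rw [heq]
  have hF0 : (0 : ℂ) + (0 : ℂ) ^ 2 * Q b' 0 = 0 := by ring
  have hslope : HasDerivAt (fun w : ℂ => w + w ^ 2 * Q b' w) 1 0 := by
    rw [hasDerivAt_iff_tendsto_slope]
    have hev : ∀ w ∈ ({(0 : ℂ)}ᶜ : Set ℂ),
        slope (fun w : ℂ => w + w ^ 2 * Q b' w) 0 w = 1 + w * Q b' w := by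
      intro w hw
      have hw0 : w ≠ 0 := hw
      rw [slope_def_field, div_eq_iff (sub_ne_zero.mpr hw0)]
      beta_reduce
      ring
    have hlim : Tendsto (fun w : ℂ => 1 + w * Q b' w) (nhdsWithin 0 {(0 : ℂ)}ᶜ)
        (nhds 1) := by
      have : Tendsto (fun w : ℂ => 1 + w * Q b' w) (nhds 0) (nhds 1) := by
        have hc : Continuous (fun w : ℂ => 1 + w * Q b' w) :=
          continuous_const.add (continuous_id.mul (hQcont b'))
        have := hc.tendsto 0
        simpa using this
      exact this.mono_left nhdsWithin_le_nhds
    exact hlim.congr' (by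
      filter_upwards [self_mem_nhdsWithin] with w hw using (hev w hw).symm)
  exact hslope.deriv
end
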